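/- Let G be an irreducible graph-directed matrix product system. Then there exist constants A > 0 and r > 0 such that for any t₁, t₂ ∈ (0,1), any η₁ ∈ Σ_{t₁}, and any η₂ ∈ Σ_{t₂}, there are finite paths φ and ψ such that η₁φη₂ψ is a path belonging to Σ_{t₁t₂r} and ‖T(η₁φη₂ψ)‖ ≤ A·‖T(η₁)‖·‖T(η₂)‖. -/

import Mathlib

open Filter Topology

/-- A graph-directed matrix product system: a finite directed graph (multiple
edges allowed) with a dimension for each vertex, a non-negative transition
matrix for each edge (encoded as a block of a big matrix indexed by
`(v : V) × Fin (dim v)`, supported on the `(src e, tgt e)` block), and a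
weight `W e ∈ (0,1)` for each edge. -/
structure GMPS where
  V : Type
  E : Type
  [fintV : Fintype V]
  [decV : DecidableEq V]
  [fintE : Fintype E]
  [decE : DecidableEq E]
  src : E → V
  tgt : E → V
  dim : V → ℕ
  dim_pos : ∀ v, 0 < dim v
  T : E → Matrix ((v : V) × Fin (dim v)) ((v : V) × Fin (dim v)) ℝ
  T_nonneg : ∀ e i j, 0 ≤ T e i j
  T_block : ∀ e i j, T e i j ≠ 0 → i.1 = src e ∧ j.1 = tgt e
  W : E → ℝ
  W_pos : ∀ e, 0 < W e
  W_lt_one : ∀ e, W e < 1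

attribute [instance] GMPS.fintV GMPS.decV GMPS.fintE GMPS.decE

namespace GMPS

variable (G : GMPS)

/-- The global index type for the block matrices. -/
abbrev Idx := (v : G.V) × Fin (G.dim v)

/-- A finite sequence of edges is a path when consecutive edges are compatible. -/
def IsPath (l : List G.E) : Prop := l.Chain' fun e e' => G.tgt e = G.src e'

/-- A (nonempty) path starts at the source of its first edge. -/
def startsAt (l : List G.E) (v : G.V) : Prop := ∃ e, l.head? = some e ∧ G.src e = v

/-- A (nonempty) path ends at the target of its last edge. -/
def endsAt (l : List G.E) (v : G.V) : Prop := ∃ e, l.getLast? = some e ∧ G.tgt e = v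

/-- `l` is a (nonempty) path from `v₁` to `v₂`. -/
def PathFrom (l : List G.E) (v₁ v₂ : G.V) : Prop :=
  G.IsPath l ∧ G.startsAt l v₁ ∧ G.endsAt l v₂

/-- The underlying graph is strongly connected. -/
def StronglyConnected : Prop := ∀ v₁ v₂ : G.V, ∃ l, G.PathFrom l v₁ v₂

/-- The product `T(e₁) ⋯ T(eₙ)` of the transition matrices along a path. -/
noncomputable def Tp (l : List G.E) : Matrix G.Idx G.Idx ℝ := (l.map G.T).prod

/-- The product `W(e₁) ⋯ W(eₙ)` of the weights along a path. -/
def Wp (l : List G.E) : ℝ := (l.map G.W).prod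

/-- The norm of a matrix: the sum of its entries. -/
noncomputable def mnorm (M : Matrix G.Idx G.Idx ℝ) : ℝ := ∑ i, ∑ j, M i j

/-- `Σ_t`: the paths `η` with `W(η) < t ≤ W(η⁻)` and `‖T(η)‖ > 0`. -/
def SigmaT (t : ℝ) : Set (List G.E) :=
  {l | G.IsPath l ∧ l ≠ [] ∧ G.Wp l < t ∧ t ≤ G.Wp l.dropLast ∧ 0 < G.mnorm (G.Tp l)}

/-- `H` is an irreducibility family: for all vertices `v₁, v₂` and all indices
`i ≤ d(v₁)`, `j ≤ d(v₂)` there is `γ ∈ H` from `v₁` to `v₂` with `T(γ)_{i,j} > 0`. -/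
def IrredFamily (H : Finset (List G.E)) : Prop :=
  ∀ (v₁ v₂ : G.V) (i : Fin (G.dim v₁)) (j : Fin (G.dim v₂)),
    ∃ γ ∈ H, G.PathFrom γ v₁ v₂ ∧ 0 < G.Tp γ ⟨v₁, i⟩ ⟨v₂, j⟩

/-- The matrix product system is irreducible. -/
def Irreducible : Prop := ∃ H : Finset (List G.E), G.IrredFamily H

/-- An infinite path in the graph. -/
def IsInfPath (γ : ℕ → G.E) : Prop := ∀ n, G.tgt (γ n) = G.src (γ (n + 1))

/-- The prefix `γ|n` of an infinite path. -/
def pfx (γ : ℕ → G.E) (n : ℕ) : List G.E := (List.range n).map γ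

/-- The quotient `log ‖T(γ|n)‖ / log W(γ|n)` whose `liminf`/`limsup`/limit are
the lower/upper Lyapunov exponent and Lyapunov exponent of `γ`. -/
noncomputable def lyapQ (γ : ℕ → G.E) (n : ℕ) : ℝ :=
  Real.log (G.mnorm (G.Tp (G.pfx γ n))) / Real.log (G.Wp (G.pfx γ n))

/-- `min_{η ∈ Σ_t} log ‖T(η)‖ / log t`. -/
noncomputable def minQ (t : ℝ) : ℝ :=
  sInf ((fun l => Real.log (G.mnorm (G.Tp l)) / Real.log t) '' G.SigmaT t)

/-- `max_{η ∈ Σ_t} log ‖T(η)‖ / log t`. -/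
noncomputable def maxQ (t : ℝ) : ℝ :=
  sSup ((fun l => Real.log (G.mnorm (G.Tp l)) / Real.log t) '' G.SigmaT t)

/-- The spectral radius of a (non-negative) square matrix. -/
noncomputable def spr (M : Matrix G.Idx G.Idx ℝ) : ℝ := (spectralRadius ℝ M).toReal

end GMPS

namespace GMPS
variable (G : GMPS)

lemma Tp_nil : G.Tp [] = 1 := rfl

lemma Tp_cons (e : G.E) (l : List G.E) : G.Tp (e :: l) = G.T e * G.Tp l := by
  simp [Tp]

lemma Tp_append (a b : List G.E) : G.Tp (a ++ b) = G.Tp a * G.Tp b := by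
  simp [Tp]

lemma Wp_nil : G.Wp [] = 1 := rfl

lemma Wp_cons (e : G.E) (l : List G.E) : G.Wp (e :: l) = G.W e * G.Wp l := by
  simp [Wp]

lemma Wp_append (a b : List G.E) : G.Wp (a ++ b) = G.Wp a * G.Wp b := by
  simp [Wp]

lemma Wp_pos (l : List G.E) : 0 < G.Wp l := by
  induction l with
  | nil => simp [Wp_nil]
  | cons e l ih => rw [Wp_cons]; exact mul_pos (G.W_pos e) ih

lemma Wp_le_one (l : List G.E) : G.Wp l ≤ 1 := by
  induction l with
  | nil => simp [Wp_nil]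
  | cons e l ih =>
    rw [Wp_cons]
    calc G.W e * G.Wp l ≤ 1 * 1 := by
          apply mul_le_mul (le_of_lt (G.W_lt_one e)) ih (le_of_lt (G.Wp_pos l)) zero_le_one
      _ = 1 := by ring

lemma Tp_nonneg (l : List G.E) : ∀ i j, 0 ≤ G.Tp l i j := by
  induction l with
  | nil => intro i j; rw [Tp_nil]; by_cases h : i = j <;> simp [Matrix.one_apply, h]
  | cons e l ih =>
    intro i j
    rw [Tp_cons, Matrix.mul_apply]
    exact Finset.sum_nonneg fun c _ => mul_nonneg (G.T_nonneg e i c) (ih c j)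

lemma mnorm_nonneg {M : Matrix G.Idx G.Idx ℝ} (h : ∀ i j, 0 ≤ M i j) : 0 ≤ G.mnorm M :=
  Finset.sum_nonneg fun i _ => Finset.sum_nonneg fun j _ => h i j

lemma entry_le_mnorm {M : Matrix G.Idx G.Idx ℝ} (h : ∀ i j, 0 ≤ M i j) (i j : G.Idx) :
    M i j ≤ G.mnorm M := by
  calc M i j ≤ ∑ j', M i j' :=
        Finset.single_le_sum (fun c _ => h i c) (Finset.mem_univ j)
    _ ≤ G.mnorm M :=
        Finset.single_le_sum (fun c (_ : c ∈ Finset.univ) =>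
          Finset.sum_nonneg fun j' _ => h c j') (Finset.mem_univ i)

lemma exists_pos_entry {M : Matrix G.Idx G.Idx ℝ} (hM : ∀ i j, 0 ≤ M i j)
    (h : 0 < G.mnorm M) : ∃ i j, 0 < M i j := by
  by_contra hc
  push_neg at hc
  have : G.mnorm M ≤ 0 :=
    Finset.sum_nonpos fun i _ => Finset.sum_nonpos fun j _ => hc i j
  linarith

lemma mul_entry_lb {M N : Matrix G.Idx G.Idx ℝ} (hM : ∀ i j, 0 ≤ M i j)
    (hN : ∀ i j, 0 ≤ N i j) (i j k : G.Idx) : M i j * N j k ≤ (M * N) i k := by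
  rw [Matrix.mul_apply]
  exact Finset.single_le_sum (fun c _ => mul_nonneg (hM i c) (hN c k)) (Finset.mem_univ j)

lemma mnorm_mul_le {M N : Matrix G.Idx G.Idx ℝ} (hM : ∀ i j, 0 ≤ M i j)
    (hN : ∀ i j, 0 ≤ N i j) : G.mnorm (M * N) ≤ G.mnorm M * G.mnorm N := by
  have hrow : ∀ j, ∑ k, N j k ≤ G.mnorm N := fun j =>
    Finset.single_le_sum (fun c (_ : c ∈ Finset.univ) =>
      Finset.sum_nonneg fun k _ => hN c k) (Finset.mem_univ j)
  have h1 : ∀ i, ∑ k, (M * N) i k = ∑ j, M i j * ∑ k, N j k := by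
    intro i
    simp only [Matrix.mul_apply, Finset.mul_sum]
    exact Finset.sum_comm
  unfold mnorm
  calc ∑ i, ∑ k, (M * N) i k = ∑ i, ∑ j, M i j * ∑ k, N j k := by
        exact Finset.sum_congr rfl fun i _ => h1 i
    _ ≤ ∑ i, ∑ j, M i j * G.mnorm N := by
        apply Finset.sum_le_sum; intro i _
        apply Finset.sum_le_sum; intro j _
        exact mul_le_mul_of_nonneg_left (hrow j) (hM i j)
    _ = (∑ i, ∑ j, M i j) * G.mnorm N := by rw [Finset.sum_mul]; simp [Finset.sum_mul]
    _ = G.mnorm M * G.mnorm N := rfl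

lemma Tp_block (l : List G.E) (hl : l ≠ []) (i j : G.Idx) (h : G.Tp l i j ≠ 0) :
    i.1 = G.src (l.head hl) ∧ j.1 = G.tgt (l.getLast hl) := by
  induction l generalizing i with
  | nil => exact absurd rfl hl
  | cons e t ih =>
    rw [Tp_cons, Matrix.mul_apply] at h
    obtain ⟨c, _, hc⟩ := Finset.exists_ne_zero_of_sum_ne_zero h
    have h1 : G.T e i c ≠ 0 := fun h0 => hc (by rw [h0, zero_mul])
    have h2 : G.Tp t c j ≠ 0 := fun h0 => hc (by rw [h0, mul_zero])
    have hb := G.T_block e i c h1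
    rcases t with _ | ⟨e', t'⟩
    · rw [Tp_nil] at h2
      have : c = j := by
        by_contra hcj
        rw [Matrix.one_apply_ne hcj] at h2
        exact h2 rfl
      subst this
      exact ⟨hb.1, hb.2.symm ▸ rfl⟩
    · obtain ⟨hc1, hc2⟩ := ih (by simp) c h2
      refine ⟨hb.1, ?_⟩
      rw [List.getLast_cons (by simp : (e' :: t') ≠ [])]
      exact hc2

lemma isPath_append {l₁ l₂ : List G.E} (h₁ : G.IsPath l₁) (h₂ : G.IsPath l₂)
    (h : ∀ x ∈ l₁.getLast?, ∀ y ∈ l₂.head?, G.tgt x = G.src y) :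
    G.IsPath (l₁ ++ l₂) :=
  List.isChain_append.mpr ⟨h₁, h₂, h⟩

lemma pfx_succ (ζ : ℕ → G.E) (n : ℕ) : G.pfx ζ (n + 1) = G.pfx ζ n ++ [ζ n] := by
  simp [pfx, List.range_succ]

lemma pfx_isPath {ζ : ℕ → G.E} (hζ : G.IsInfPath ζ) (n : ℕ) : G.IsPath (G.pfx ζ n) := by
  induction n with
  | zero => simp [pfx, IsPath, List.Chain']
  | succ k ih =>
    rw [pfx_succ]
    apply G.isPath_append ih (by simp [IsPath, List.Chain'])
    intro x hx y hy
    simp only [List.head?_cons, Option.mem_def, Option.some.injEq] at hy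
    subst hy
    rcases k with _ | k'
    · simp [pfx] at hx
    · rw [pfx_succ, List.getLast?_concat] at hx
      simp only [Option.mem_def, Option.some.injEq] at hx
      subst hx
      exact hζ k'

lemma Wp_pfx_le (ζ : ℕ → G.E) (w : ℝ) (hw : ∀ e, G.W e ≤ w) (hw0 : 0 ≤ w) (n : ℕ) :
    G.Wp (G.pfx ζ n) ≤ w ^ n := by
  induction n with
  | zero => simp [pfx, Wp_nil]
  | succ k ih =>
    rw [pfx_succ, Wp_append, pow_succ]
    apply mul_le_mul ih _ (le_of_lt (G.Wp_pos _)) (pow_nonneg hw0 k)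
    simp [Wp_cons, Wp_nil, hw (ζ k)]

lemma mnorm_Tp_le (B : ℝ) (hB : ∀ e, G.mnorm (G.T e) ≤ B) (hB1 : 1 ≤ B) (l : List G.E) :
    G.mnorm (G.Tp l) ≤ (Fintype.card G.Idx : ℝ) * B ^ l.length := by
  induction l with
  | nil =>
    simp only [Tp_nil, List.length_nil, pow_zero, mul_one]
    unfold mnorm
    simp [Matrix.one_apply]
  | cons e t ih =>
    rw [Tp_cons, List.length_cons, pow_succ]
    calc G.mnorm (G.T e * G.Tp t) ≤ G.mnorm (G.T e) * G.mnorm (G.Tp t) :=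
          G.mnorm_mul_le (G.T_nonneg e) (G.Tp_nonneg t)
      _ ≤ B * ((Fintype.card G.Idx : ℝ) * B ^ t.length) := by
          apply mul_le_mul (hB e) ih (G.mnorm_nonneg (G.Tp_nonneg t)) (by linarith)
      _ = (Fintype.card G.Idx : ℝ) * (B ^ t.length * B) := by ring

section Cyc

variable {G} (γ : List G.E) (hγ : γ ≠ [])

/-- The periodic extension of a cycle. -/
noncomputable def cyc (hγ : γ ≠ []) (n : ℕ) : G.E := γ.get ⟨n % γ.length, Nat.mod_lt n (List.length_pos_iff.mpr hγ)⟩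

lemma cyc_infPath (hp : G.IsPath γ)
    (hcyc : G.tgt (γ.getLast hγ) = G.src (γ.head hγ)) :
    G.IsInfPath (cyc γ hγ) := by
  intro n
  unfold cyc
  set L := γ.length with hLdef
  have hL : 0 < L := List.length_pos_iff.mpr hγ
  have hs : n % L < L := Nat.mod_lt n hL
  have hmod : (n + 1) % L = (n % L + 1) % L := by
    rcases Nat.lt_or_ge 1 L with h1 | h1
    · conv_lhs => rw [Nat.add_mod]
      rw [Nat.mod_eq_of_lt h1]
    · have hL1 : L = 1 := by omega
      simp [hL1]
  by_cases hcase : n % L + 1 < L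
  · have h2 : (n + 1) % L = n % L + 1 := by rw [hmod, Nat.mod_eq_of_lt hcase]
    simp only [← hLdef, h2]
    exact List.isChain_iff_getElem.mp hp (n % L) (by omega)
  · have hsL : n % L = L - 1 := by omega
    have h2 : (n + 1) % L = 0 := by rw [hmod]; simp [show n % L + 1 = L by omega]
    simp only [← hLdef, h2]
    have hlast : γ.get ⟨n % L, hs⟩ = γ.getLast hγ := by
      rw [List.getLast_eq_getElem, List.get_eq_getElem]
      congr 1
    have hhead : γ.get ⟨0, hL⟩ = γ.head hγ := by
      rw [List.head_eq_getElem, List.get_eq_getElem]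
    rw [hlast, hhead]
    exact hcyc

lemma cyc_pos_aux (m : G.Idx) (hm : 0 < G.Tp γ m m) (n : ℕ) :
    0 < (G.Tp (G.pfx (cyc γ hγ) n) *
      G.Tp (γ.drop (n % γ.length))) m m := by
  set L := γ.length with hLdef
  have hL : 0 < L := List.length_pos_iff.mpr hγ
  induction n with
  | zero =>
    simp only [pfx, List.range_zero, List.map_nil]
    rw [show G.Tp [] = 1 from rfl, one_mul, Nat.zero_mod, List.drop_zero]
    exact hm
  | succ k ih =>
    have hs : k % L < L := Nat.mod_lt k hL
    have hdrop : γ.drop (k % L) = γ.get ⟨k % L, hs⟩ :: γ.drop (k % L + 1) := by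
      rw [List.drop_eq_getElem_cons hs]; rfl
    have hstep : G.Tp (G.pfx (cyc γ hγ) k) * G.Tp (γ.drop (k % L))
        = G.Tp (G.pfx (cyc γ hγ) (k + 1)) * G.Tp (γ.drop (k % L + 1)) := by
      rw [hdrop, G.Tp_cons, G.pfx_succ, G.Tp_append]
      rw [show G.Tp [cyc γ hγ k] = G.T (cyc γ hγ k) * G.Tp [] from G.Tp_cons _ _,
        show G.Tp ([] : List G.E) = 1 from rfl, mul_one]
      rw [show cyc γ hγ k = γ.get ⟨k % L, hs⟩ from rfl]
      rw [mul_assoc]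
    rw [hstep] at ih
    have hmod : (k + 1) % L = (k % L + 1) % L := by
      rcases Nat.lt_or_ge 1 L with h1 | h1
      · conv_lhs => rw [Nat.add_mod]
        rw [Nat.mod_eq_of_lt h1]
      · have hL1 : L = 1 := by omega
        simp [hL1]
    by_cases hcase : k % L + 1 < L
    · have h2 : (k + 1) % L = k % L + 1 := by rw [hmod, Nat.mod_eq_of_lt hcase]
      rw [h2]
      exact ih
    · have h3 : k % L + 1 = L := by omega
      have h2 : (k + 1) % L = 0 := by rw [hmod]; simp [h3]
      rw [h2, List.drop_zero]
      rw [h3, List.drop_length, show G.Tp ([] : List G.E) = 1 from rfl, mul_one] at ih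
      calc (0:ℝ) < G.Tp (G.pfx (cyc γ hγ) (k+1)) m m * G.Tp γ m m := mul_pos ih hm
        _ ≤ (G.Tp (G.pfx (cyc γ hγ) (k+1)) * G.Tp γ) m m :=
            G.mul_entry_lb (G.Tp_nonneg _) (G.Tp_nonneg _) m m m

lemma cyc_pos (m : G.Idx) (hm : 0 < G.Tp γ m m) (n : ℕ) :
    ∃ c, 0 < G.Tp (G.pfx (cyc γ hγ) n) m c := by
  have h := cyc_pos_aux γ hγ m hm n
  by_contra hc
  push_neg at hc
  have hz : ∀ c, G.Tp (G.pfx (cyc γ hγ) n) m c = 0 :=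
    fun c => le_antisymm (hc c) (G.Tp_nonneg _ m c)
  rw [Matrix.mul_apply] at h
  have : ∀ c ∈ Finset.univ, G.Tp (G.pfx (cyc γ hγ) n) m c *
      G.Tp (γ.drop (n % γ.length)) c m = 0 := fun c _ => by rw [hz c, zero_mul]
  rw [Finset.sum_eq_zero this] at h
  exact lt_irrefl 0 h

end Cyc

end GMPS


namespace GMPS
variable {G : GMPS}

lemma startsAt_src {l : List G.E} {v : G.V} (h : G.startsAt l v) (hne : l ≠ []) :
    G.src (l.head hne) = v := by
  obtain ⟨e, he, hv⟩ := h
  rw [List.head?_eq_head hne] at he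
  rw [← Option.some.inj he] at hv
  exact hv

lemma endsAt_tgt {l : List G.E} {v : G.V} (h : G.endsAt l v) (hne : l ≠ []) :
    G.tgt (l.getLast hne) = v := by
  obtain ⟨e, he, hv⟩ := h
  rw [List.getLast?_eq_getLast hne] at he
  rw [← Option.some.inj he] at hv
  exact hv

lemma startsAt_ne_nil {l : List G.E} {v : G.V} (h : G.startsAt l v) : l ≠ [] := by
  obtain ⟨e, he, -⟩ := h
  intro hl; subst hl; simp at he

lemma Wp_lb {l : List G.E} (hne : l ≠ []) {t w : ℝ} (ht : t ≤ G.Wp l.dropLast)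
    (hw : 0 < w) (hwle : ∀ e, w ≤ G.W e) : t * w ≤ G.Wp l := by
  conv_rhs => rw [← List.dropLast_append_getLast hne]
  rw [Wp_append, Wp_cons, Wp_nil, mul_one]
  exact mul_le_mul ht (hwle _) (le_of_lt hw) (le_of_lt (G.Wp_pos _))

lemma pfx_head? (ζ : ℕ → G.E) (k : ℕ) : (G.pfx ζ (k + 1)).head? = some (ζ 0) := by
  unfold pfx
  rw [List.range_succ_eq_map]
  simp

lemma pfx_length (ζ : ℕ → G.E) (n : ℕ) : (G.pfx ζ n).length = n := by
  simp [pfx]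

end GMPS


/-- In an irreducible matrix product system there are constants `A, r > 0` such
that for all `t₁, t₂ ∈ (0,1)`, `η₁ ∈ Σ_{t₁}` and `η₂ ∈ Σ_{t₂}`, there are paths
`φ, ψ` with `η₁φη₂ψ ∈ Σ_{t₁t₂r}` and `‖T(η₁φη₂ψ)‖ ≤ A ‖T(η₁)‖ ‖T(η₂)‖`. -/
theorem gmps_sigma_concat_estimate (G : GMPS) (hsc : G.StronglyConnected)
    (hirr : G.Irreducible) :
    ∃ A r : ℝ, 0 < A ∧ 0 < r ∧
      ∀ t₁ ∈ Set.Ioo (0:ℝ) 1, ∀ t₂ ∈ Set.Ioo (0:ℝ) 1,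
        ∀ η₁ ∈ G.SigmaT t₁, ∀ η₂ ∈ G.SigmaT t₂,
          ∃ φ ψ : List G.E, (η₁ ++ φ ++ η₂ ++ ψ) ∈ G.SigmaT (t₁ * t₂ * r) ∧
            G.mnorm (G.Tp (η₁ ++ φ ++ η₂ ++ ψ)) ≤
              A * G.mnorm (G.Tp η₁) * G.mnorm (G.Tp η₂) := by
  classical
  obtain ⟨H, hH⟩ := hirr
  by_cases hE : Nonempty G.E
  case neg =>
    refine ⟨1, 1, one_pos, one_pos, ?_⟩
    intro t₁ _ t₂ _ η₁ hη₁ η₂ hη₂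
    exfalso
    obtain ⟨-, hne, -⟩ := hη₁
    rcases η₁ with _ | ⟨e, _⟩
    · exact hne rfl
    · exact hE ⟨e⟩
  obtain ⟨e₀⟩ := hE
  have hEuniv : (Finset.univ : Finset G.E).Nonempty := ⟨e₀, Finset.mem_univ e₀⟩
  obtain ⟨γ₀, hγ₀H, -, -⟩ := hH (G.src e₀) (G.src e₀) ⟨0, G.dim_pos _⟩ ⟨0, G.dim_pos _⟩
  have hHne : H.Nonempty := ⟨γ₀, hγ₀H⟩
  set wmin := Finset.univ.inf' hEuniv G.W with hwmin_def
  have hwmin_pos : 0 < wmin := (Finset.lt_inf'_iff hEuniv).mpr fun e _ => G.W_pos e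
  have hwmin_le : ∀ e, wmin ≤ G.W e := fun e => Finset.inf'_le _ (Finset.mem_univ e)
  set wmax := Finset.univ.sup' hEuniv G.W with hwmax_def
  have hwmax_lt1 : wmax < 1 := (Finset.sup'_lt_iff hEuniv).mpr fun e _ => G.W_lt_one e
  have hwmax_pos : 0 < wmax :=
    lt_of_lt_of_le (G.W_pos e₀) (Finset.le_sup' _ (Finset.mem_univ e₀))
  have hwmax_le : ∀ e, G.W e ≤ wmax := fun e => Finset.le_sup' _ (Finset.mem_univ e)
  set wH := H.inf' hHne G.Wp with hwH_def
  have hwH_pos : 0 < wH := (Finset.lt_inf'_iff hHne).mpr fun l _ => G.Wp_pos l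
  have hwH_le : ∀ l ∈ H, wH ≤ G.Wp l := fun l hl => Finset.inf'_le _ hl
  set r := wmin * wmin * wH with hr_def
  have hr_pos : 0 < r := by positivity
  set CH := max (H.sup' hHne fun l => G.mnorm (G.Tp l)) 1 with hCH_def
  have hCH1 : (1:ℝ) ≤ CH := le_max_right _ _
  have hCH_le : ∀ l ∈ H, G.mnorm (G.Tp l) ≤ CH := fun l hl =>
    le_trans (Finset.le_sup' (fun l => G.mnorm (G.Tp l)) hl) (le_max_left _ _)
  set B := max (Finset.univ.sup' hEuniv fun e => G.mnorm (G.T e)) 1 with hB_def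
  have hB1 : (1:ℝ) ≤ B := le_max_right _ _
  have hB_le : ∀ e, G.mnorm (G.T e) ≤ B := fun e =>
    le_trans (Finset.le_sup' (fun e => G.mnorm (G.T e)) (Finset.mem_univ e)) (le_max_left _ _)
  set Cd := (Fintype.card G.Idx : ℝ) with hCd_def
  have hIdx : Nonempty G.Idx := ⟨⟨G.src e₀, ⟨0, G.dim_pos _⟩⟩⟩
  have hCd_pos : 0 < Cd := by rw [hCd_def]; exact_mod_cast Fintype.card_pos
  obtain ⟨N, hN⟩ := exists_pow_lt_of_lt_one hr_pos hwmax_lt1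
  have hBN_pos : 0 < CH * (Cd * B ^ N) := by positivity
  refine ⟨CH * (Cd * B ^ N), r, hBN_pos, hr_pos, ?_⟩
  rintro t₁ ⟨ht₁0, ht₁1⟩ t₂ ⟨ht₂0, ht₂1⟩ η₁ ⟨hP₁, hne₁, hW₁, hW₁d, hT₁⟩
    η₂ ⟨hP₂, hne₂, hW₂, hW₂d, hT₂⟩
  obtain ⟨i, j, hij⟩ := G.exists_pos_entry (G.Tp_nonneg η₁) hT₁
  obtain ⟨k, m, hkm⟩ := G.exists_pos_entry (G.Tp_nonneg η₂) hT₂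
  obtain ⟨hi1, hj1⟩ := G.Tp_block η₁ hne₁ i j (ne_of_gt hij)
  obtain ⟨hk1, hm1⟩ := G.Tp_block η₂ hne₂ k m (ne_of_gt hkm)
  obtain ⟨φ, hφH, hφP, hφpos⟩ := hH j.1 k.1 j.2 k.2
  obtain ⟨γ, hγH, hγP, hγpos⟩ := hH m.1 m.1 m.2 m.2
  simp only [Sigma.eta] at hφpos hγpos
  have hφne : φ ≠ [] := GMPS.startsAt_ne_nil hφP.2.1
  have hγne : γ ≠ [] := GMPS.startsAt_ne_nil hγP.2.1
  have hγhead : G.src (γ.head hγne) = m.1 := GMPS.startsAt_src hγP.2.1 hγne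
  have hγlast : G.tgt (γ.getLast hγne) = m.1 := GMPS.endsAt_tgt hγP.2.2 hγne
  set ζ := GMPS.cyc γ hγne with hζ_def
  have hζ : G.IsInfPath ζ := GMPS.cyc_infPath γ hγne hγP.1 (hγlast.trans hγhead.symm)
  -- weights
  have hWη₁lb : t₁ * wmin ≤ G.Wp η₁ := GMPS.Wp_lb hne₁ hW₁d hwmin_pos hwmin_le
  have hWη₂lb : t₂ * wmin ≤ G.Wp η₂ := GMPS.Wp_lb hne₂ hW₂d hwmin_pos hwmin_le
  have hWφlb : wH ≤ G.Wp φ := hwH_le φ hφH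
  set t := t₁ * t₂ * r with ht_def
  have ht_pos : 0 < t := by positivity
  set W₀ := G.Wp η₁ * (G.Wp φ * G.Wp η₂) with hW₀_def
  have hW₀lb : t ≤ W₀ := by
    have h1 : t = (t₁ * wmin) * (wH * (t₂ * wmin)) := by rw [ht_def, hr_def]; ring
    rw [h1, hW₀_def]
    apply mul_le_mul hWη₁lb _ (by positivity) (le_of_lt (G.Wp_pos η₁))
    exact mul_le_mul hWφlb hWη₂lb (by positivity) (le_of_lt (G.Wp_pos φ))
  have hW₀ub : W₀ < t₁ * t₂ := by
    have h1 : W₀ ≤ G.Wp η₁ * G.Wp η₂ := by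
      rw [hW₀_def]
      have := mul_le_mul (G.Wp_le_one φ) (le_refl (G.Wp η₂))
        (le_of_lt (G.Wp_pos η₂)) zero_le_one
      rw [one_mul] at this
      exact mul_le_mul_of_nonneg_left this (le_of_lt (G.Wp_pos η₁))
    exact lt_of_le_of_lt h1
      (mul_lt_mul'' hW₁ hW₂ (le_of_lt (G.Wp_pos η₁)) (le_of_lt (G.Wp_pos η₂)))
  have hW₀le1 : W₀ ≤ 1 := by
    rw [hW₀_def]
    exact mul_le_one₀ (G.Wp_le_one η₁)
      (le_of_lt (mul_pos (G.Wp_pos φ) (G.Wp_pos η₂)))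
      (mul_le_one₀ (G.Wp_le_one φ) (le_of_lt (G.Wp_pos η₂)) (G.Wp_le_one η₂))
  have hWfull : ∀ n, G.Wp (η₁ ++ (φ ++ (η₂ ++ G.pfx ζ n))) = W₀ * G.Wp (G.pfx ζ n) := by
    intro n
    simp only [GMPS.Wp_append, hW₀_def]
    ring
  -- existence of n
  have hex : ∃ n, G.Wp (η₁ ++ (φ ++ (η₂ ++ G.pfx ζ n))) < t := by
    obtain ⟨n, hn⟩ := exists_pow_lt_of_lt_one ht_pos hwmax_lt1
    refine ⟨n, ?_⟩
    rw [hWfull n]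
    calc W₀ * G.Wp (G.pfx ζ n) ≤ 1 * wmax ^ n := by
          apply mul_le_mul hW₀le1 (G.Wp_pfx_le ζ wmax hwmax_le (le_of_lt hwmax_pos) n)
            (le_of_lt (G.Wp_pos _)) zero_le_one
      _ = wmax ^ n := one_mul _
      _ < t := hn
  set n := Nat.find hex with hn_def
  have hpn : G.Wp (η₁ ++ (φ ++ (η₂ ++ G.pfx ζ n))) < t := Nat.find_spec hex
  have hn0 : n ≠ 0 := by
    intro h0
    have := hpn
    rw [h0] at this
    simp only [GMPS.pfx, List.range_zero, List.map_nil, List.append_nil] at this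
    rw [show G.Wp (η₁ ++ (φ ++ η₂)) = W₀ by simp only [GMPS.Wp_append, hW₀_def]] at this
    exact absurd this (not_lt.mpr hW₀lb)
  obtain ⟨k', hk'⟩ : ∃ k', n = k' + 1 := ⟨n - 1, by omega⟩
  have hpk : ¬ G.Wp (η₁ ++ (φ ++ (η₂ ++ G.pfx ζ k'))) < t :=
    Nat.find_min hex (by omega)
  have hpk' : t ≤ G.Wp (η₁ ++ (φ ++ (η₂ ++ G.pfx ζ k'))) := le_of_not_gt hpk
  -- length bound k' < N
  have hkN : k' < N := by
    have h1 : t ≤ W₀ * G.Wp (G.pfx ζ k') := by rw [← hWfull k']; exact hpk'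
    have h2 : W₀ * G.Wp (G.pfx ζ k') < (t₁ * t₂) * G.Wp (G.pfx ζ k') :=
      mul_lt_mul_of_pos_right hW₀ub (G.Wp_pos _)
    have h3 : r < G.Wp (G.pfx ζ k') := by
      have := lt_of_le_of_lt h1 h2
      rw [ht_def] at this
      have ht₁₂ : 0 < t₁ * t₂ := by positivity
      nlinarith [G.Wp_pos (G.pfx ζ k')]
    have h4 : wmax ^ N < wmax ^ k' :=
      lt_of_lt_of_le (lt_trans hN (lt_of_lt_of_le h3 (G.Wp_pfx_le ζ wmax hwmax_le
        (le_of_lt hwmax_pos) k'))) (le_refl _)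
    exact (pow_lt_pow_iff_right_of_lt_one₀ hwmax_pos hwmax_lt1).mp h4
  set ψ := G.pfx ζ n with hψ_def
  refine ⟨φ, ψ, ⟨?_, ?_, ?_, ?_, ?_⟩, ?_⟩
  -- 1. IsPath
  · show G.IsPath (η₁ ++ φ ++ η₂ ++ ψ)
    have heq0 : η₁ ++ φ ++ η₂ ++ ψ = η₁ ++ (φ ++ (η₂ ++ ψ)) := by simp [List.append_assoc]
    rw [heq0]
    apply G.isPath_append hP₁
    · apply G.isPath_append hφP.1
      · apply G.isPath_append hP₂ (G.pfx_isPath hζ n)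
        intro x hx y hy
        rw [List.getLast?_eq_getLast hne₂] at hx
        rw [hk'] at hy
        rw [G.pfx_head? ζ k'] at hy
        simp only [Option.mem_def, Option.some.injEq] at hx hy
        subst hx; subst hy
        rw [← hm1]
        show m.1 = G.src (γ.get ⟨0 % γ.length, _⟩)
        have : γ.get ⟨0 % γ.length, Nat.mod_lt 0 (List.length_pos_iff.mpr hγne)⟩
            = γ.head hγne := by
          rw [List.head_eq_getElem, List.get_eq_getElem]
          simp
        rw [this, hγhead]
      · intro x hx y hy
        rw [List.getLast?_eq_getLast hφne] at hx
        have hη₂ψ : (η₂ ++ ψ).head? = η₂.head? := List.head?_append_of_ne_nil _ hne₂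
        rw [hη₂ψ, List.head?_eq_head hne₂] at hy
        simp only [Option.mem_def, Option.some.injEq] at hx hy
        subst hx; subst hy
        rw [GMPS.endsAt_tgt hφP.2.2 hφne, ← hk1]
    · intro x hx y hy
      rw [List.getLast?_eq_getLast hne₁] at hx
      have hfh : (φ ++ (η₂ ++ ψ)).head? = φ.head? := List.head?_append_of_ne_nil _ hφne
      rw [hfh, List.head?_eq_head hφne] at hy
      simp only [Option.mem_def, Option.some.injEq] at hx hy
      subst hx; subst hy
      rw [← hj1, GMPS.startsAt_src hφP.2.1 hφne]
  -- 2. nonempty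
  · simp [hne₁]
  -- 3. Wp < t
  · show G.Wp (η₁ ++ φ ++ η₂ ++ ψ) < t₁ * t₂ * r
    rw [← ht_def]
    have : η₁ ++ φ ++ η₂ ++ ψ = η₁ ++ (φ ++ (η₂ ++ ψ)) := by simp [List.append_assoc]
    rw [this]
    exact hpn
  -- 4. t ≤ Wp dropLast
  · show t₁ * t₂ * r ≤ G.Wp (η₁ ++ φ ++ η₂ ++ ψ).dropLast
    rw [← ht_def]
    have hsplit : η₁ ++ φ ++ η₂ ++ ψ
        = (η₁ ++ (φ ++ (η₂ ++ G.pfx ζ k'))) ++ [ζ k'] := by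
      rw [hψ_def, hk', G.pfx_succ ζ k']
      simp [List.append_assoc]
    rw [hsplit, List.dropLast_concat]
    exact hpk'
  -- 5. positive norm
  · obtain ⟨c, hc⟩ := GMPS.cyc_pos γ hγne m hγpos n
    have h1 : 0 < G.Tp (η₂ ++ ψ) k c := by
      rw [GMPS.Tp_append]
      exact lt_of_lt_of_le (mul_pos hkm hc)
        (G.mul_entry_lb (G.Tp_nonneg η₂) (G.Tp_nonneg ψ) k m c)
    have h2 : 0 < G.Tp (φ ++ (η₂ ++ ψ)) j c := by
      rw [GMPS.Tp_append]
      exact lt_of_lt_of_le (mul_pos hφpos h1)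
        (G.mul_entry_lb (G.Tp_nonneg φ) (G.Tp_nonneg _) j k c)
    have h3 : 0 < G.Tp (η₁ ++ (φ ++ (η₂ ++ ψ))) i c := by
      rw [GMPS.Tp_append]
      exact lt_of_lt_of_le (mul_pos hij h2)
        (G.mul_entry_lb (G.Tp_nonneg η₁) (G.Tp_nonneg _) i j c)
    have heq : η₁ ++ φ ++ η₂ ++ ψ = η₁ ++ (φ ++ (η₂ ++ ψ)) := by simp [List.append_assoc]
    rw [heq]
    exact lt_of_lt_of_le h3 (G.entry_le_mnorm (G.Tp_nonneg _) i c)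
  -- 6. norm bound
  · have heq : η₁ ++ φ ++ η₂ ++ ψ = η₁ ++ (φ ++ (η₂ ++ ψ)) := by simp [List.append_assoc]
    rw [heq]
    have hψlen : ψ.length = n := G.pfx_length ζ n
    have hψle : G.mnorm (G.Tp ψ) ≤ Cd * B ^ N := by
      calc G.mnorm (G.Tp ψ) ≤ Cd * B ^ ψ.length := G.mnorm_Tp_le B hB_le hB1 ψ
        _ ≤ Cd * B ^ N := by
            apply mul_le_mul_of_nonneg_left _ (le_of_lt hCd_pos)
            exact pow_le_pow_right₀ hB1 (by omega)
    have hφle : G.mnorm (G.Tp φ) ≤ CH := hCH_le φ hφH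
    have m1 : G.mnorm (G.Tp (η₂ ++ ψ)) ≤ G.mnorm (G.Tp η₂) * G.mnorm (G.Tp ψ) := by
      rw [GMPS.Tp_append]; exact G.mnorm_mul_le (G.Tp_nonneg _) (G.Tp_nonneg _)
    have m2 : G.mnorm (G.Tp (φ ++ (η₂ ++ ψ)))
        ≤ G.mnorm (G.Tp φ) * G.mnorm (G.Tp (η₂ ++ ψ)) := by
      rw [GMPS.Tp_append]; exact G.mnorm_mul_le (G.Tp_nonneg _) (G.Tp_nonneg _)
    have m3 : G.mnorm (G.Tp (η₁ ++ (φ ++ (η₂ ++ ψ))))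
        ≤ G.mnorm (G.Tp η₁) * G.mnorm (G.Tp (φ ++ (η₂ ++ ψ))) := by
      rw [GMPS.Tp_append]; exact G.mnorm_mul_le (G.Tp_nonneg _) (G.Tp_nonneg _)
    have n1 : 0 ≤ G.mnorm (G.Tp η₁) := G.mnorm_nonneg (G.Tp_nonneg _)
    have n2 : 0 ≤ G.mnorm (G.Tp η₂) := G.mnorm_nonneg (G.Tp_nonneg _)
    have n3 : 0 ≤ G.mnorm (G.Tp ψ) := G.mnorm_nonneg (G.Tp_nonneg _)
    have n4 : 0 ≤ G.mnorm (G.Tp φ) := G.mnorm_nonneg (G.Tp_nonneg _)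
    have n5 : 0 ≤ G.mnorm (G.Tp (η₂ ++ ψ)) := G.mnorm_nonneg (G.Tp_nonneg _)
    calc G.mnorm (G.Tp (η₁ ++ (φ ++ (η₂ ++ ψ))))
        ≤ G.mnorm (G.Tp η₁) * (G.mnorm (G.Tp φ) * (G.mnorm (G.Tp η₂) * G.mnorm (G.Tp ψ))) := by
          refine le_trans m3 (mul_le_mul_of_nonneg_left (le_trans m2 ?_) n1)
          exact mul_le_mul_of_nonneg_left m1 n4
      _ ≤ G.mnorm (G.Tp η₁) * (CH * (G.mnorm (G.Tp η₂) * (Cd * B ^ N))) := by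
          apply mul_le_mul_of_nonneg_left _ n1
          apply mul_le_mul hφle (mul_le_mul_of_nonneg_left hψle n2)
            (mul_nonneg n2 n3) (by linarith)
      _ = CH * (Cd * B ^ N) * G.mnorm (G.Tp η₁) * G.mnorm (G.Tp η₂) := by ring
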